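/- Let n ≥ 3 be an integer, β₁, β₂, γ₁, γ₂ complex numbers with β₁ ≠ β₂, γ₁ ≠ 0, γ₂ ≠ 0, and define U(x), Z(x), W(x), F(x), P_r(x), Q_r(x) as in the context. Let α be a root of F and set S_r(x) = α·Q_r(x) − P_r(x). Then for every integer r ≥ 0 and every x ∈ ℂ such that W(x) is defined and is neither zero nor a negative real number, S_r(x) = {α·((x−β₂)·W(x)^{1/n} − (x−β₁)) − (β₁(x−β₂)·W(x)^{1/n} − β₂(x−β₁))}·X*_{n,r}(U(x), Z(x)) − (x−β₂)·(α−β₁)·U(x)^r·R_{1,n,r}(W(x)), where R_{m,n,r}(w) = [Γ(r+1+m/n)/(Γ(m/n)·r!)]·∫₁^w ((1−t)(t−w))^r·t^{m/n−r−1} dt, the integral taken along the straight segment from 1 to w. -/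

import Mathlib

noncomputable section
open scoped BigOperators

/-- Principal branch `n`-th root: for `w = s·e^{iφ}` with `-π < φ ≤ π`,
`cnroot n w = s^{1/n}·e^{iφ/n}`. -/
noncomputable def cnroot (n : ℕ) (w : ℂ) : ℂ := w ^ ((n : ℂ))⁻¹

/-- Principal branch square root: for `w = s·e^{iφ}` with `-π < φ ≤ π`,
`csqrt w = s^{1/2}·e^{iφ/2}`. -/
noncomputable def csqrt (w : ℂ) : ℂ := w ^ ((2 : ℂ))⁻¹

/-- Coefficient of `x^k` in the hypergeometric polynomial
`₂F₁(-r, -r-m/n; 1-m/n; x)`. -/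
noncomputable def hyperCoeff (m n r k : ℕ) : ℚ :=
  (ascPochhammer ℚ k).eval (-(r : ℚ)) * (ascPochhammer ℚ k).eval (-(r : ℚ) - (m : ℚ)/n) /
    ((ascPochhammer ℚ k).eval (1 - (m : ℚ)/n) * (Nat.factorial k))

/-- The hypergeometric polynomial `X_{m,n,r}(x) = ₂F₁(-r, -r-m/n; 1-m/n; x)`. -/
noncomputable def hyperX (m n r : ℕ) : Polynomial ℚ :=
  ∑ k ∈ Finset.range (r + 1), Polynomial.C (hyperCoeff m n r k) * Polynomial.X ^ k

/-- `D_{m,n,r}`: the least positive integer `D` such that `D·X_{m,n,r}` has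
integer coefficients. -/
noncomputable def hyperD (m n r : ℕ) : ℕ :=
  sInf {D : ℕ | 0 < D ∧ ∀ k, ((D : ℚ) * (hyperX m n r).coeff k).den = 1}

/-- `N_{d,n,r}` (for parameter `m`): the gcd of the numerators of the coefficients of
`X_{m,n,r}(1 - d·x)`. -/
noncomputable def hyperN (m d n r : ℕ) : ℕ :=
  Finset.gcd (Finset.range (r + 1))
    fun k => (((hyperX m n r).comp (1 - Polynomial.C (d : ℚ) * Polynomial.X)).coeff k).num.natAbs

/-- `𝒩_{d,n} = Π_{p | n} p^{min(v_p(d), v_p(n) + 1/(p-1))}`. -/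
noncomputable def scriptN (d n : ℕ) : ℝ :=
  ∏ p ∈ n.primeFactors,
    (p : ℝ) ^ min ((padicValNat p d : ℝ)) ((padicValNat p n : ℝ) + 1 / ((p : ℝ) - 1))

/-- Value of the hypergeometric polynomial `X_{m,n,r}` at a complex number. -/
noncomputable def hyperXc (m n r : ℕ) (x : ℂ) : ℂ := Polynomial.aeval x (hyperX m n r)

/-- The homogenised hypergeometric polynomial `X*_{m,n,r}(x,y) = y^r·X_{m,n,r}(x/y)`. -/
noncomputable def hyperXstar (m n r : ℕ) (x y : ℂ) : ℂ := y ^ r * hyperXc m n r (x / y)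

/-- `K` is the subfield `ℚ` of `ℂ`. -/
def IsRatSubfield (K : Subfield ℂ) : Prop := ∀ z : ℂ, z ∈ K ↔ ∃ a : ℚ, z = (a : ℂ)

/-- `K` is an imaginary quadratic number field viewed as a subfield of `ℂ`. -/
def IsImagQuadSubfield (K : Subfield ℂ) : Prop :=
  ∃ t : ℤ, t < 0 ∧ ∀ z : ℂ, z ∈ K ↔ ∃ a b : ℚ, z = (a : ℂ) + (b : ℂ) * csqrt (t : ℂ)

/-- `R_{m,n,r}(w) = [Γ(r+1+m/n)/(Γ(m/n)·r!)]·∫₁^w ((1-t)(t-w))^r·t^{m/n-r-1} dt`,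
the integral taken along the straight segment from `1` to `w`
(parametrised by `t = 1 + l(w-1)`, `0 ≤ l ≤ 1`), with principal branch powers. -/
noncomputable def Rmnr (m n r : ℕ) (w : ℂ) : ℂ :=
  Complex.Gamma ((r : ℂ) + 1 + (m : ℂ)/n) / (Complex.Gamma ((m : ℂ)/n) * (Nat.factorial r)) *
    ∫ l in (0:ℝ)..1,
      ((1 - (1 + (l : ℂ) * (w - 1))) * ((1 + (l : ℂ) * (w - 1)) - w)) ^ r *
        (1 + (l : ℂ) * (w - 1)) ^ ((m : ℂ)/n - (r : ℂ) - 1) * (w - 1)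

open Finset

lemma qnzGen {K : Type*} [Field K] [LinearOrder K] [IsStrictOrderedRing K] (μ : K) (hμ0 : 0 < μ) (hμ1 : μ < 1)
    (a b : ℕ) : μ + b - a ≠ 0 := by
  rcases le_or_gt a b with h | h
  · have : (a:K) ≤ b := by exact_mod_cast h
    intro he; linarith
  · have : (b:K) + 1 ≤ a := by exact_mod_cast h
    intro he; linarith

lemma hyperXc_eq (n r : ℕ) (z : ℂ) :
    hyperXc 1 n r z = ∑ j ∈ range (r+1), (hyperCoeff 1 n r j : ℂ) * z ^ j := by
  simp [hyperXc, hyperX, map_sum]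

lemma GammaProd (z : ℂ) (hz : ∀ k : ℕ, z + k ≠ 0) :
    ∀ k : ℕ, Complex.Gamma (z + k) = Complex.Gamma z * ∏ s ∈ range k, (z + s) := by
  intro k
  induction k with
  | zero => simp
  | succ k ih =>
    have : z + ((k:ℂ) + 1) = (z + k) + 1 := by ring
    rw [show ((k+1 : ℕ) : ℂ) = (k:ℂ) + 1 by push_cast; ring, this,
      Complex.Gamma_add_one _ (hz k), ih, Finset.prod_range_succ]
    ring

lemma sumId : ∀ (r : ℕ) (x : ℂ), (∀ i : ℕ, i ≤ r → x + i ≠ 0) →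
    ∑ i ∈ range (r+1), (-1:ℂ)^i * (r.choose i) / (x + i)
      = (r.factorial : ℂ) / ∏ i ∈ range (r+1), (x + i) := by
  intro r
  induction r with
  | zero => intro x hx; simp
  | succ r ih =>
    intro x hx
    have hxi : ∀ i : ℕ, i ≤ r → x + i ≠ 0 := fun i hi => hx i (hi.trans (Nat.le_succ r))
    have hxi1 : ∀ i : ℕ, i ≤ r → (x+1) + i ≠ 0 := by
      intro i hi h
      apply hx (i+1) (by omega)
      push_cast
      linear_combination h
    have key : ∑ i ∈ range (r+2), (-1:ℂ)^i * ((r+1).choose i) / (x + i)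
        = (∑ i ∈ range (r+1), (-1:ℂ)^i * (r.choose i) / (x + i))
          - ∑ i ∈ range (r+1), (-1:ℂ)^i * (r.choose i) / ((x+1) + i) := by
      rw [Finset.sum_range_succ' (fun i => (-1:ℂ)^i * ((r+1).choose i) / (x + i)) (r+1)]
      have step : (∑ k ∈ range (r+1), (-1:ℂ)^(k+1) * ((r+1).choose (k+1)) / (x + ↑(k+1)))
          = (∑ k ∈ range (r+1), (-1:ℂ)^(k+1) * (r.choose k) / (x + ↑(k+1)))
            + ∑ k ∈ range (r+1), (-1:ℂ)^(k+1) * (r.choose (k+1)) / (x + ↑(k+1)) := by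
        rw [← Finset.sum_add_distrib]
        refine Finset.sum_congr rfl fun k _ => ?_
        rw [Nat.choose_succ_succ]
        push_cast
        ring
      rw [step]
      have h1 : (∑ k ∈ range (r+1), (-1:ℂ)^(k+1) * (r.choose k) / (x + ↑(k+1)))
          = - ∑ k ∈ range (r+1), (-1:ℂ)^k * (r.choose k) / ((x+1) + k) := by
        rw [← Finset.sum_neg_distrib]
        refine Finset.sum_congr rfl fun k _ => ?_
        push_cast
        ring
      have h2 : (∑ k ∈ range (r+1), (-1:ℂ)^(k+1) * (r.choose (k+1)) / (x + ↑(k+1)))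
            + (-1:ℂ)^0 * (((r+1).choose 0 : ℕ)) / (x + ((0:ℕ):ℂ))
          = ∑ i ∈ range (r+1), (-1:ℂ)^i * (r.choose i) / (x + i) := by
        rw [Finset.sum_range_succ]
        rw [Finset.sum_range_succ' (fun i => (-1:ℂ)^i * ((r.choose i):ℂ) / (x + i)) r]
        simp [Nat.choose_succ_self]
      rw [h1]
      rw [← h2]
      push_cast
      ring
    rw [key, ih x hxi, ih (x+1) hxi1]
    have hP : ∏ i ∈ range (r+1), (x + (i:ℂ)) ≠ 0 :=
      Finset.prod_ne_zero_iff.2 fun i hi => hxi i (Nat.lt_succ_iff.mp (mem_range.mp hi))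
    have hP1 : ∏ i ∈ range (r+1), ((x+1) + (i:ℂ)) ≠ 0 :=
      Finset.prod_ne_zero_iff.2 fun i hi => hxi1 i (Nat.lt_succ_iff.mp (mem_range.mp hi))
    have e1 : ∏ i ∈ range (r+2), (x + (i:ℂ)) = (∏ i ∈ range (r+1), (x + (i:ℂ))) * (x + ((r:ℂ)+1)) := by
      rw [Finset.prod_range_succ]
      push_cast
      ring
    have e2 : ∏ i ∈ range (r+2), (x + (i:ℂ)) = x * ∏ i ∈ range (r+1), ((x+1) + (i:ℂ)) := by
      rw [Finset.prod_range_succ' (fun i => x + (i:ℂ)) (r+1)]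
      have : ∀ i ∈ range (r+1), (x + ((i+1:ℕ):ℂ)) = (x+1) + i := fun i _ => by push_cast; ring
      rw [Finset.prod_congr rfl this]
      push_cast
      ring
    have rel : (∏ i ∈ range (r+1), (x + (i:ℂ))) * (x + ((r:ℂ)+1))
        = x * ∏ i ∈ range (r+1), ((x+1) + (i:ℂ)) := by rw [← e1, e2]
    have hy : x + ((r:ℂ)+1) ≠ 0 := by
      have := hx (r+1) le_rfl
      push_cast at this
      exact this
    rw [e1, div_sub_div _ _ hP hP1, div_eq_div_iff (mul_ne_zero hP hP1) (mul_ne_zero hP hy),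
      Nat.factorial_succ]
    push_cast
    linear_combination (-(r.factorial:ℂ) * ∏ i ∈ range (r+1), (x + (i:ℂ))) * rel
lemma coeffStarGen (μ : ℚ) (hμ0 : 0 < μ) (hμ1 : μ < 1) (r : ℕ) : ∀ j, j ≤ r →
    ((ascPochhammer ℚ j).eval (-(r:ℚ)) * (ascPochhammer ℚ j).eval (-(r:ℚ) - μ) /
      ((ascPochhammer ℚ j).eval (1 - μ) * (j.factorial))) * ∏ s ∈ range (r+1), (μ - j + s)
      = (∏ s ∈ range (r+1), (μ + s)) * (-1)^j * (r.choose j) := by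
  intro j
  induction j with
  | zero =>
    intro _
    simp only [ascPochhammer_zero, Polynomial.eval_one, Nat.factorial_zero, Nat.cast_one,
      Nat.cast_zero, pow_zero, Nat.choose_zero_right, mul_one, one_mul, sub_zero]
    rw [div_self (by norm_num), one_mul]
  | succ j ihj =>
    intro hj1
    have hj : j ≤ r := by omega
    have ih := ihj hj
    set h0 : ℚ := (ascPochhammer ℚ j).eval (-(r:ℚ)) * (ascPochhammer ℚ j).eval (-(r:ℚ) - μ) /
      ((ascPochhammer ℚ j).eval (1 - μ) * (j.factorial)) with hh0
    set h1 : ℚ := (ascPochhammer ℚ (j+1)).eval (-(r:ℚ)) * (ascPochhammer ℚ (j+1)).eval (-(r:ℚ) - μ) /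
      ((ascPochhammer ℚ (j+1)).eval (1 - μ) * ((j+1).factorial)) with hh1
    have hCc : (ascPochhammer ℚ j).eval (1 - μ) ≠ 0 :=
      ne_of_gt (ascPochhammer_pos j (1 - μ) (by linarith))
    have hd1 : (1 - μ + (j:ℚ)) ≠ 0 := by
      have : (0:ℚ) ≤ j := Nat.cast_nonneg j
      intro h; linarith
    have hj1' : ((j:ℚ) + 1) ≠ 0 := by positivity
    have hfac : ((j.factorial : ℚ)) ≠ 0 := by exact_mod_cast j.factorial_ne_zero
    have hrec : h1 * ((1 - μ + j) * ((j:ℚ)+1)) = h0 * (((j:ℚ) - r) * ((j:ℚ) - r - μ)) := by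
      rw [hh0, hh1]
      simp only [ascPochhammer_succ_eval, Nat.factorial_succ]
      push_cast
      field_simp
      ring
    have rel1 : (∏ s ∈ range (r+1), (μ - ((j:ℚ)+1) + s)) * (μ + r - j)
        = (μ - j - 1) * ∏ s ∈ range (r+1), (μ - j + s) := by
      have e1 : ∏ s ∈ range (r+2), (μ - (j:ℚ) - 1 + s)
          = (∏ s ∈ range (r+1), (μ - ((j:ℚ)+1) + s)) * (μ + r - j) := by
        rw [Finset.prod_range_succ]
        rw [Finset.prod_congr rfl (fun s _ => by ring :
          ∀ s ∈ range (r+1), (μ - (j:ℚ) - 1 + (s:ℚ)) = (μ - ((j:ℚ)+1) + s))]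
        congr 1
        push_cast
        ring
      have e2 : ∏ s ∈ range (r+2), (μ - (j:ℚ) - 1 + s)
          = (μ - j - 1) * ∏ s ∈ range (r+1), (μ - j + s) := by
        rw [Finset.prod_range_succ' (fun s => μ - (j:ℚ) - 1 + (s:ℚ)) (r+1)]
        rw [Finset.prod_congr rfl (fun s _ => by push_cast; ring :
          ∀ s ∈ range (r+1), (μ - (j:ℚ) - 1 + ((s+1:ℕ):ℚ)) = (μ - j + s))]
        push_cast
        ring
      rw [← e1, e2]
    have rel2 : ((r.choose (j+1) : ℚ)) * ((j:ℚ)+1) = (r.choose j : ℚ) * ((r:ℚ) - j) := by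
      have h := congrArg (Nat.cast (R:=ℚ)) (Nat.choose_succ_right_eq r j)
      push_cast [Nat.cast_sub hj] at h
      linarith
    have hμrj : (μ + (r:ℚ) - j) ≠ 0 := qnzGen μ hμ0 hμ1 j r
    have hmul : ((1 - μ + (j:ℚ)) * (((j:ℚ))+1) * (μ + r - j)) ≠ 0 :=
      mul_ne_zero (mul_ne_zero hd1 hj1') hμrj
    apply mul_right_cancel₀ hmul
    have hgoalprod : ∀ s ∈ range (r+1), (μ - ((j+1:ℕ):ℚ) + (s:ℚ)) = (μ - ((j:ℚ)+1) + s) :=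
      fun s _ => by push_cast; ring
    rw [Finset.prod_congr rfl hgoalprod]
    push_cast
    linear_combination
      ((∏ s ∈ range (r+1), (μ - ((j:ℚ)+1) + s)) * (μ + (r:ℚ) - j)) * hrec
      + (h0 * (((j:ℚ) - r) * ((j:ℚ) - r - μ))) * rel1
      + ((((j:ℚ) - r) * ((j:ℚ) - r - μ)) * (μ - (j:ℚ) - 1)) * ih
      + ((∏ s ∈ range (r+1), (μ + s)) * (-1:ℚ)^j * (1 - μ + (j:ℚ)) * (μ + (r:ℚ) - j)) * rel2
open Finset

lemma seg_mem (w : ℂ) (hw : w ∈ Complex.slitPlane) :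
    ∀ l : ℝ, l ∈ Set.uIcc (0:ℝ) 1 → 1 + (l:ℂ) * (w - 1) ∈ Complex.slitPlane := by
  intro l hl
  rw [Set.uIcc_of_le (by norm_num)] at hl
  obtain ⟨hl0, hl1⟩ := hl
  rw [Complex.mem_slitPlane_iff] at hw ⊢
  have hre : (1 + (l:ℂ) * (w - 1)).re = 1 + l * (w.re - 1) := by simp
  have him : (1 + (l:ℂ) * (w - 1)).im = l * w.im := by simp
  rcases hw with hre' | him'
  · left
    rw [hre]
    rcases lt_or_eq_of_le hl1 with h1 | h1
    · nlinarith [mul_nonneg hl0 hre'.le]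
    · rw [h1]; nlinarith
  · rcases eq_or_lt_of_le hl0 with h0 | h0
    · left; rw [hre, ← h0]; norm_num
    · right; rw [him]; exact mul_ne_zero (ne_of_gt h0) him'

lemma ftc_cpow (w : ℂ) (hw : w ∈ Complex.slitPlane) (c : ℂ) (hc : c + 1 ≠ 0) :
    ∫ l in (0:ℝ)..1, (1 + (l:ℂ) * (w - 1)) ^ c * (w - 1)
      = (w ^ (c + 1) - 1) / (c + 1) := by
  have hmem := seg_mem w hw
  have hline : ∀ l : ℝ, HasDerivAt (fun l : ℝ => 1 + (l:ℂ) * (w - 1)) (w - 1) l := by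
    intro l
    have h1 : HasDerivAt (fun l : ℝ => (l:ℂ)) 1 l := Complex.ofRealCLM.hasDerivAt
    simpa using (h1.mul_const (w - 1)).const_add 1
  have hderiv : ∀ l ∈ Set.uIcc (0:ℝ) 1,
      HasDerivAt (fun l : ℝ => (1 + (l:ℂ) * (w - 1)) ^ (c + 1) / (c + 1))
        ((1 + (l:ℂ) * (w - 1)) ^ c * (w - 1)) l := by
    intro l hl
    have h2 : HasDerivAt (fun z : ℂ => z ^ (c + 1))
        ((c + 1) * (1 + (l:ℂ) * (w - 1)) ^ (c + 1 - 1)) (1 + (l:ℂ) * (w - 1)) :=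
      (Complex.hasStrictDerivAt_cpow_const (hmem l hl)).hasDerivAt
    have h3 := (h2.comp l (hline l)).div_const (c + 1)
    have : (c + 1) * (1 + (l:ℂ) * (w - 1)) ^ (c + 1 - 1) * (w - 1) / (c + 1)
        = (1 + (l:ℂ) * (w - 1)) ^ c * (w - 1) := by
      rw [add_sub_cancel_right]
      field_simp
    rw [this] at h3
    exact h3
  have hcont : ContinuousOn (fun l : ℝ => (1 + (l:ℂ) * (w - 1)) ^ c * (w - 1))
      (Set.uIcc (0:ℝ) 1) := by
    apply ContinuousOn.mul _ continuousOn_const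
    apply ContinuousOn.cpow_const _ hmem
    exact (continuous_const.add (Complex.continuous_ofReal.mul continuous_const)).continuousOn
  rw [intervalIntegral.integral_eq_sub_of_hasDerivAt hderiv hcont.intervalIntegrable]
  push_cast
  rw [show (1:ℂ) + 1 * (w - 1) = w by ring, show (1:ℂ) + 0 * (w - 1) = (1:ℂ) by ring,
    Complex.one_cpow, sub_div]

lemma expand_t (r : ℕ) (μ w t : ℂ) (ht : t ≠ 0) :
    ((1 - t) * (t - w)) ^ r * t ^ (μ - r - 1) * (w - 1)
      = ∑ i ∈ range (r+1), ∑ j ∈ range (r+1),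
          ((-1:ℂ)^(i+j) * (r.choose i) * (r.choose j) * w^j) *
            (t ^ (μ - 1 + i - j) * (w - 1)) := by
  rw [mul_pow, show (1 - t) = (-t) + 1 by ring, show (t - w) = (-w) + t by ring,
    add_pow, add_pow, Finset.sum_mul_sum, Finset.sum_mul, Finset.sum_mul]
  refine Finset.sum_congr rfl fun i hi => ?_
  rw [Finset.sum_mul, Finset.sum_mul]
  refine Finset.sum_congr rfl fun j hj => ?_
  have hjr : j ≤ r := Nat.lt_succ_iff.mp (mem_range.mp hj)
  have e : μ - 1 + (i:ℂ) - j = μ - (r:ℂ) - 1 + (i:ℕ) + ((r-j:ℕ):ℂ) := by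
    rw [Nat.cast_sub hjr]; push_cast; ring
  rw [e, Complex.cpow_add _ _ ht, Complex.cpow_add _ _ ht, Complex.cpow_natCast,
    Complex.cpow_natCast]
  rw [neg_pow t i, neg_pow w j, one_pow]
  ring
lemma Rmnr_eq (n r : ℕ) (w : ℂ) (hw0 : w ≠ 0) (hw : w ∈ Complex.slitPlane)
    (hexp : ∀ i j : ℕ, (1:ℂ)/n + i - j ≠ 0) :
    Rmnr 1 n r w = (Complex.Gamma ((r:ℂ) + 1 + 1/n) / (Complex.Gamma (1/(n:ℂ)) * (r.factorial))) *
      ∑ i ∈ range (r+1), ∑ j ∈ range (r+1),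
        ((-1:ℂ)^(i+j) * (r.choose i) * (r.choose j) * w^j) *
          ((w ^ ((1:ℂ)/n + i - j) - 1) / ((1:ℂ)/n + i - j)) := by
  have hmem := seg_mem w hw
  have ht0 : ∀ l : ℝ, l ∈ Set.uIcc (0:ℝ) 1 → (1 + (l:ℂ) * (w - 1)) ≠ 0 :=
    fun l hl => Complex.slitPlane_ne_zero (hmem l hl)
  rw [Rmnr]
  simp only [Nat.cast_one]
  congr 1
  -- rewrite integrand
  have hEq : Set.EqOn
      (fun l : ℝ => ((1 - (1 + (l:ℂ) * (w - 1))) * ((1 + (l:ℂ) * (w - 1)) - w)) ^ r *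
        (1 + (l:ℂ) * (w - 1)) ^ ((1:ℂ)/n - (r:ℂ) - 1) * (w - 1))
      (fun l : ℝ => ∑ i ∈ range (r+1), ∑ j ∈ range (r+1),
        ((-1:ℂ)^(i+j) * (r.choose i) * (r.choose j) * w^j) *
          ((1 + (l:ℂ) * (w - 1)) ^ ((1:ℂ)/n - 1 + i - j) * (w - 1)))
      (Set.uIcc (0:ℝ) 1) := fun l hl => expand_t r ((1:ℂ)/n) w _ (ht0 l hl)
  rw [intervalIntegral.integral_congr hEq]
  -- continuity of each term
  have hcont : ∀ i j : ℕ, ContinuousOn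
      (fun l : ℝ => ((-1:ℂ)^(i+j) * (r.choose i) * (r.choose j) * w^j) *
        ((1 + (l:ℂ) * (w - 1)) ^ ((1:ℂ)/n - 1 + i - j) * (w - 1))) (Set.uIcc (0:ℝ) 1) := by
    intro i j
    apply ContinuousOn.mul continuousOn_const
    apply ContinuousOn.mul _ continuousOn_const
    apply ContinuousOn.cpow_const _ hmem
    exact (continuous_const.add (Complex.continuous_ofReal.mul continuous_const)).continuousOn
  rw [intervalIntegral.integral_finset_sum (fun i _ =>
    ((continuousOn_finset_sum _ (fun j _ => hcont i j)).intervalIntegrable))]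
  refine Finset.sum_congr rfl fun i _ => ?_
  rw [intervalIntegral.integral_finset_sum (fun j _ => (hcont i j).intervalIntegrable)]
  refine Finset.sum_congr rfl fun j _ => ?_
  rw [intervalIntegral.integral_const_mul]
  congr 1
  have h := ftc_cpow w hw ((1:ℂ)/n - 1 + i - j) (by
    have := hexp i j
    intro hc; apply this; linear_combination hc)
  rw [show (1:ℂ)/n - 1 + (i:ℂ) - j + 1 = (1:ℂ)/n + i - j by ring] at h
  exact h
lemma coeffStarC (n r : ℕ) (hn : 3 ≤ n) (j : ℕ) (hj : j ≤ r) :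
    (hyperCoeff 1 n r j : ℂ) * ∏ s ∈ range (r+1), ((1:ℂ)/n - j + s)
      = (∏ s ∈ range (r+1), ((1:ℂ)/n + s)) * (-1)^j * (r.choose j) := by
  have hn0 : (0:ℚ) < n := by positivity
  have h := coeffStarGen (1/(n:ℚ)) (by positivity)
    (by rw [div_lt_one hn0]; exact_mod_cast by omega) r j hj
  have hc : hyperCoeff 1 n r j = (ascPochhammer ℚ j).eval (-(r:ℚ)) *
      (ascPochhammer ℚ j).eval (-(r:ℚ) - 1/(n:ℚ)) /
      ((ascPochhammer ℚ j).eval (1 - 1/(n:ℚ)) * (j.factorial)) := by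
    rw [hyperCoeff]; norm_num
  rw [← hc] at h
  have h2 := congrArg (fun q : ℚ => (q : ℂ)) h
  push_cast at h2
  exact h2

lemma key (n r : ℕ) (hn : 3 ≤ n) (w : ℂ) (hw0 : w ≠ 0) (hw : w ∈ Complex.slitPlane) :
    hyperXc 1 n r w + Rmnr 1 n r w
      = w ^ ((1:ℂ)/n) * w ^ r * hyperXc 1 n r (1/w) := by
  have hnR : (0:ℝ) < n := by positivity
  have hexpR : ∀ i j : ℕ, (1:ℝ)/n + i - j ≠ 0 :=
    fun i j => qnzGen ((1:ℝ)/n) (by positivity)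
      (by rw [div_lt_one hnR]; exact_mod_cast by omega) j i
  have hexp : ∀ i j : ℕ, (1:ℂ)/n + i - j ≠ 0 := by
    intro i j h
    have he : (1:ℂ)/n + i - j = (((1:ℝ)/n + i - j : ℝ) : ℂ) := by push_cast; ring
    rw [he, Complex.ofReal_eq_zero] at h
    exact hexpR i j h
  have hofr : (1:ℂ)/n = Complex.ofReal ((1:ℝ)/n) := by push_cast; ring
  have hfacC : ((r.factorial : ℂ)) ≠ 0 := by exact_mod_cast r.factorial_ne_zero
  -- Gamma computation
  have hznk : ∀ k : ℕ, (1:ℂ)/n + k ≠ 0 := by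
    intro k h
    have he : (1:ℂ)/n + k = (((1:ℝ)/n + (k:ℝ) - ((0:ℕ):ℝ) : ℝ) : ℂ) := by push_cast; ring
    rw [he, Complex.ofReal_eq_zero] at h
    exact hexpR k 0 h
  have hGne : Complex.Gamma ((1:ℂ)/n) ≠ 0 := by
    apply Complex.Gamma_ne_zero
    intro m h
    have := congrArg Complex.re h
    rw [hofr, Complex.ofReal_re] at this
    simp only [Complex.neg_re, Complex.natCast_re] at this
    have h1 : (0:ℝ) < 1/n := by positivity
    have h2 : (0:ℝ) ≤ m := Nat.cast_nonneg m
    linarith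
  have hCC : Complex.Gamma ((r:ℂ) + 1 + 1/n) / (Complex.Gamma ((1:ℂ)/n) * (r.factorial))
      = (∏ s ∈ range (r+1), ((1:ℂ)/n + s)) / r.factorial := by
    have hG := GammaProd ((1:ℂ)/n) hznk (r+1)
    rw [show (1:ℂ)/n + ((r+1:ℕ):ℂ) = (r:ℂ) + 1 + 1/n by push_cast; ring] at hG
    rw [hG, mul_div_mul_left _ _ hGne]
  rw [hyperXc_eq, hyperXc_eq, Rmnr_eq n r w hw0 hw hexp, hCC]
  -- nonvanishing of the products
  have hPjne : ∀ j : ℕ, (∏ s ∈ range (r+1), ((1:ℂ)/n - j + s)) ≠ 0 := by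
    intro j
    refine Finset.prod_ne_zero_iff.2 fun s _ h => hexp s j ?_
    linear_combination h
  have hQine : ∀ i : ℕ, (∏ s ∈ range (r+1), ((1:ℂ)/n + i - r + s)) ≠ 0 := by
    intro i
    refine Finset.prod_ne_zero_iff.2 fun s _ h => hexp (i+s) r ?_
    push_cast
    linear_combination h
  -- split each term of the double sum
  have hsplit : ∀ i ∈ range (r+1), ∀ j ∈ range (r+1),
      ((-1:ℂ)^(i+j) * (r.choose i) * (r.choose j) * w^j) *
        ((w ^ ((1:ℂ)/n + i - j) - 1) / ((1:ℂ)/n + i - j))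
      = ((-1:ℂ)^(i+j) * (r.choose i) * (r.choose j)) *
          ((w ^ ((1:ℂ)/n) * w^i) / ((1:ℂ)/n + i - j))
        - ((-1:ℂ)^(i+j) * (r.choose i) * (r.choose j)) * (w^j / ((1:ℂ)/n + i - j)) := by
    intro i _ j _
    have hwp : w^j * w ^ ((1:ℂ)/n + i - j) = w ^ ((1:ℂ)/n) * w^i := by
      rw [← Complex.cpow_natCast w j, ← Complex.cpow_add _ _ hw0,
        show (j:ℂ) + ((1:ℂ)/n + i - j) = (1:ℂ)/n + (i:ℂ) by ring,
        Complex.cpow_add _ _ hw0, Complex.cpow_natCast]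
    linear_combination ((-1:ℂ)^(i+j) * (r.choose i) * (r.choose j) / ((1:ℂ)/n + i - j)) * hwp
  have hdouble : ∑ i ∈ range (r+1), ∑ j ∈ range (r+1),
      ((-1:ℂ)^(i+j) * (r.choose i) * (r.choose j) * w^j) *
        ((w ^ ((1:ℂ)/n + i - j) - 1) / ((1:ℂ)/n + i - j))
      = (∑ i ∈ range (r+1), ∑ j ∈ range (r+1),
          ((-1:ℂ)^(i+j) * (r.choose i) * (r.choose j)) *
            ((w ^ ((1:ℂ)/n) * w^i) / ((1:ℂ)/n + i - j)))
        - ∑ i ∈ range (r+1), ∑ j ∈ range (r+1),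
            ((-1:ℂ)^(i+j) * (r.choose i) * (r.choose j)) * (w^j / ((1:ℂ)/n + i - j)) := by
    rw [← Finset.sum_sub_distrib]
    refine Finset.sum_congr rfl fun i hi => ?_
    rw [← Finset.sum_sub_distrib]
    exact Finset.sum_congr rfl (hsplit i hi)
  -- second sum: evaluates to polynomial part
  have hS2 : ∑ i ∈ range (r+1), ∑ j ∈ range (r+1),
      ((-1:ℂ)^(i+j) * (r.choose i) * (r.choose j)) * (w^j / ((1:ℂ)/n + i - j))
      = ∑ j ∈ range (r+1), ((-1:ℂ)^j * (r.choose j) * w^j) *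
          ((r.factorial : ℂ) / ∏ s ∈ range (r+1), ((1:ℂ)/n - j + s)) := by
    rw [Finset.sum_comm]
    refine Finset.sum_congr rfl fun j _ => ?_
    have hid := sumId r ((1:ℂ)/n - j) (fun i _ => by
      intro h; exact hexp i j (by linear_combination h))
    rw [← hid, Finset.mul_sum]
    refine Finset.sum_congr rfl fun i _ => ?_
    rw [pow_add]
    ring
  -- first sum
  have hS1 : ∑ i ∈ range (r+1), ∑ j ∈ range (r+1),
      ((-1:ℂ)^(i+j) * (r.choose i) * (r.choose j)) *
        ((w ^ ((1:ℂ)/n) * w^i) / ((1:ℂ)/n + i - j))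
      = ∑ i ∈ range (r+1), ((-1:ℂ)^i * (r.choose i) * (w ^ ((1:ℂ)/n) * w^i) * (-1:ℂ)^r) *
          ((r.factorial : ℂ) / ∏ s ∈ range (r+1), ((1:ℂ)/n + i - r + s)) := by
    refine Finset.sum_congr rfl fun i _ => ?_
    rw [← Finset.sum_range_reflect (fun j => ((-1:ℂ)^(i+j) * (r.choose i) * (r.choose j)) *
      ((w ^ ((1:ℂ)/n) * w^i) / ((1:ℂ)/n + i - j))) (r+1)]
    have hid := sumId r ((1:ℂ)/n + i - r) (fun j _ => by
      intro h; exact hexp (i+j) r (by push_cast; linear_combination h))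
    rw [← hid, Finset.mul_sum]
    refine Finset.sum_congr rfl fun j hj => ?_
    have hjr : j ≤ r := Nat.lt_succ_iff.mp (mem_range.mp hj)
    have hidx : r + 1 - 1 - j = r - j := by omega
    rw [hidx, Nat.choose_symm hjr, Nat.cast_sub hjr]
    have hsign : (-1:ℂ)^(r-j) = (-1)^r * (-1)^j := by
      conv_lhs => rw [show r - j = r - j from rfl]
      have : (-1:ℂ)^(r-j) * (-1)^j = (-1)^r := by
        rw [← pow_add, Nat.sub_add_cancel hjr]
      calc (-1:ℂ)^(r-j) = (-1:ℂ)^(r-j) * ((-1)^j * (-1)^j) := by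
            rw [← pow_add, ← two_mul, pow_mul]; norm_num
        _ = (-1)^r * (-1)^j := by rw [← mul_assoc, this]
    rw [pow_add, hsign]
    ring
  -- per-term identities
  have hA : ∀ j ∈ range (r+1),
      ((∏ s ∈ range (r+1), ((1:ℂ)/n + s)) / r.factorial) *
        (((-1:ℂ)^j * (r.choose j) * w^j) *
          ((r.factorial : ℂ) / ∏ s ∈ range (r+1), ((1:ℂ)/n - j + s)))
      = (hyperCoeff 1 n r j : ℂ) * w^j := by
    intro j hj
    have hjr : j ≤ r := Nat.lt_succ_iff.mp (mem_range.mp hj)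
    have hstar := coeffStarC n r hn j hjr
    have h1 : ((r.factorial:ℂ) / ∏ s ∈ range (r+1), ((1:ℂ)/n - j + s)) *
        (∏ s ∈ range (r+1), ((1:ℂ)/n - j + s)) = (r.factorial:ℂ) :=
      div_mul_cancel₀ _ (hPjne j)
    have h2 : ((∏ s ∈ range (r+1), ((1:ℂ)/n + s)) / (r.factorial:ℂ)) * (r.factorial:ℂ)
        = ∏ s ∈ range (r+1), ((1:ℂ)/n + s) := div_mul_cancel₀ _ hfacC
    apply mul_right_cancel₀ (hPjne j)
    linear_combination
      ((∏ s ∈ range (r+1), ((1:ℂ)/n + s)) / (r.factorial:ℂ) * ((-1:ℂ)^j * (r.choose j)) * w^j) * h1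
      + (((-1:ℂ)^j * (r.choose j)) * w^j) * h2
      + (-(w^j)) * hstar
  have hB : ∀ i ∈ range (r+1),
      ((∏ s ∈ range (r+1), ((1:ℂ)/n + s)) / r.factorial) *
        (((-1:ℂ)^i * (r.choose i) * (w ^ ((1:ℂ)/n) * w^i) * (-1:ℂ)^r) *
          ((r.factorial : ℂ) / ∏ s ∈ range (r+1), ((1:ℂ)/n + i - r + s)))
      = (hyperCoeff 1 n r (r-i) : ℂ) * (w ^ ((1:ℂ)/n) * w^i) := by
    intro i hi
    have hir : i ≤ r := Nat.lt_succ_iff.mp (mem_range.mp hi)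
    have hstar := coeffStarC n r hn (r-i) (Nat.sub_le r i)
    rw [Finset.prod_congr rfl (fun s _ => by
        rw [Nat.cast_sub hir]; ring :
      ∀ s ∈ range (r+1), ((1:ℂ)/n - ((r-i:ℕ):ℂ) + s) = ((1:ℂ)/n + i - r + s)),
      Nat.choose_symm hir] at hstar
    have hsign : (-1:ℂ)^(r-i) = (-1)^r * (-1)^i := by
      have h2 : (-1:ℂ)^(r-i) * (-1)^i = (-1)^r := by
        rw [← pow_add, Nat.sub_add_cancel hir]
      calc (-1:ℂ)^(r-i) = (-1:ℂ)^(r-i) * ((-1)^i * (-1)^i) := by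
            rw [← pow_add, ← two_mul, pow_mul]; norm_num
        _ = (-1)^r * (-1)^i := by rw [← mul_assoc, h2]
    rw [hsign] at hstar
    have h1 : ((r.factorial:ℂ) / ∏ s ∈ range (r+1), ((1:ℂ)/n + i - r + s)) *
        (∏ s ∈ range (r+1), ((1:ℂ)/n + i - r + s)) = (r.factorial:ℂ) :=
      div_mul_cancel₀ _ (hQine i)
    have h2 : ((∏ s ∈ range (r+1), ((1:ℂ)/n + s)) / (r.factorial:ℂ)) * (r.factorial:ℂ)
        = ∏ s ∈ range (r+1), ((1:ℂ)/n + s) := div_mul_cancel₀ _ hfacC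
    apply mul_right_cancel₀ (hQine i)
    linear_combination
      ((∏ s ∈ range (r+1), ((1:ℂ)/n + s)) / (r.factorial:ℂ) *
        ((-1:ℂ)^i * (r.choose i) * (w ^ ((1:ℂ)/n) * w^i) * (-1:ℂ)^r)) * h1
      + (((-1:ℂ)^i * (r.choose i) * (w ^ ((1:ℂ)/n) * w^i) * (-1:ℂ)^r)) * h2
      + (-(w ^ ((1:ℂ)/n) * w^i)) * hstar
  -- right-hand side
  have hRHS : w ^ ((1:ℂ)/n) * w ^ r * ∑ j ∈ range (r+1), (hyperCoeff 1 n r j : ℂ) * (1/w)^j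
      = ∑ i ∈ range (r+1), (hyperCoeff 1 n r (r-i) : ℂ) * (w ^ ((1:ℂ)/n) * w^i) := by
    rw [Finset.mul_sum]
    rw [← Finset.sum_range_reflect (fun i => (hyperCoeff 1 n r (r-i) : ℂ) *
      (w ^ ((1:ℂ)/n) * w^i)) (r+1)]
    refine Finset.sum_congr rfl fun j hj => ?_
    have hjr : j ≤ r := Nat.lt_succ_iff.mp (mem_range.mp hj)
    have hidx : r + 1 - 1 - j = r - j := by omega
    rw [hidx, Nat.sub_sub_self hjr]
    have hpow : w^r * (1/w)^j = w^(r-j) := by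
      rw [one_div, inv_pow, pow_sub₀ w hw0 hjr]
    calc w ^ ((1:ℂ)/n) * w ^ r * ((hyperCoeff 1 n r j : ℂ) * (1/w)^j)
        = (hyperCoeff 1 n r j : ℂ) * (w ^ ((1:ℂ)/n) * (w^r * (1/w)^j)) := by ring
      _ = (hyperCoeff 1 n r j : ℂ) * (w ^ ((1:ℂ)/n) * w^(r-j)) := by rw [hpow]
  rw [hRHS, hdouble, hS1, hS2, mul_sub, Finset.mul_sum, Finset.mul_sum,
    Finset.sum_congr rfl hA, Finset.sum_congr rfl hB]
  ring

/-- **Remainder formula** (Lemma 9 of the paper): the explicit hypergeometric expression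
for `S_r(x) = α·Q_r(x) - P_r(x)`. -/
theorem remainder_formula
    (n : ℕ) (hn : 3 ≤ n)
    (β₁ β₂ γ₁ γ₂ : ℂ) (hβ : β₁ ≠ β₂) (hγ₁ : γ₁ ≠ 0) (hγ₂ : γ₂ ≠ 0)
    (U Z W F : ℂ → ℂ)
    (hU : U = fun x => -γ₂ * (x - β₂) ^ n)
    (hZ : Z = fun x => γ₁ * (x - β₁) ^ n)
    (hW : W = fun x => Z x / U x)
    (hF : F = fun x => γ₁ * (x - β₁) ^ n + γ₂ * (x - β₂) ^ n)
    (α : ℂ) (hα : F α = 0)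
    (r : ℕ) (x : ℂ)
    (hdef : U x ≠ 0) (hW0 : W x ≠ 0) (hWneg : ¬((W x).im = 0 ∧ (W x).re < 0)) :
    -- S_r(x) = α·Q_r(x) - P_r(x), written out via the homogenised hypergeometric values
    α * ((x - β₂) * hyperXstar 1 n r (Z x) (U x) - (x - β₁) * hyperXstar 1 n r (U x) (Z x))
      - (β₁ * (x - β₂) * hyperXstar 1 n r (Z x) (U x)
          - β₂ * (x - β₁) * hyperXstar 1 n r (U x) (Z x))
    = (α * ((x - β₂) * cnroot n (W x) - (x - β₁))
        - (β₁ * (x - β₂) * cnroot n (W x) - β₂ * (x - β₁))) *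
        hyperXstar 1 n r (U x) (Z x)
      - (x - β₂) * (α - β₁) * (U x) ^ r * Rmnr 1 n r (W x) := by
  -- reduce to the key hypergeometric identity
  have hWx : W x = Z x / U x := by rw [hW]
  have hZWU : Z x = W x * U x := by rw [hWx]; field_simp
  have hZx : Z x ≠ 0 := hZWU ▸ mul_ne_zero hW0 hdef
  have hslit : W x ∈ Complex.slitPlane := by
    rw [Complex.mem_slitPlane_iff]
    by_contra hcon
    push_neg at hcon
    obtain ⟨hre, him⟩ := hcon
    rcases lt_or_eq_of_le hre with h | h
    · exact hWneg ⟨him, h⟩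
    · exact hW0 (Complex.ext (by simp [← h]) (by simp [him]))
  have K := key n r hn (W x) hW0 hslit
  have hAstar : hyperXstar 1 n r (Z x) (U x) = (U x)^r * hyperXc 1 n r (W x) := by
    rw [hyperXstar, ← hWx]
  have hinv : (1:ℂ) / W x = U x / Z x := by rw [hWx, one_div_div]
  have hBstar : hyperXstar 1 n r (U x) (Z x)
      = ((W x)^r * (U x)^r) * hyperXc 1 n r (1 / W x) := by
    rw [hyperXstar, ← hinv, hZWU, mul_pow]
  have hcn : cnroot n (W x) = (W x) ^ ((1:ℂ)/n) := by rw [cnroot, one_div]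
  rw [hAstar, hBstar, hcn]
  linear_combination ((α - β₁) * (x - β₂) * (U x)^r) * K
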